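/- For all n ≥ 1 and k ≥ 1, the number of partial zigzag knight's paths of length 2n that end at height k with their last step being a down-step (i.e., a step (1,-2) or (2,-1)) equals ((k+1)/(n+1))·binom(2n+2, n−k). -/

import Mathlib

open List

/-- The four right-moves of a knight. -/
def KnightSteps : Set (ℤ × ℤ) := {(2,1), (2,-1), (1,2), (1,-2)}

/-- All partial sums of the y-coordinates are nonnegative (the path stays in ℕ²). -/
def NonnegHeights (p : List (ℤ × ℤ)) : Prop :=
  ∀ i, 0 ≤ ((p.take i).map Prod.snd).sum

/-- A partial knight's path: steps from `KnightSteps`, never going below the x-axis. -/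
def IsPartialKnight (p : List (ℤ × ℤ)) : Prop :=
  (∀ s ∈ p, s ∈ KnightSteps) ∧ NonnegHeights p

/-- Any two consecutive steps have vertical components of opposite sign. -/
def IsZigzag (p : List (ℤ × ℤ)) : Prop :=
  List.Chain' (fun a b => a.2 * b.2 < 0) p

/-- A partial zigzag knight's path. -/
def IsPartialZigzag (p : List (ℤ × ℤ)) : Prop :=
  IsPartialKnight p ∧ IsZigzag p

/-- The height of the endpoint of a path. -/
def pathHeight (p : List (ℤ × ℤ)) : ℤ := (p.map Prod.snd).sum

/-- The size (x-coordinate of the endpoint) of a path. -/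
def pathSize (p : List (ℤ × ℤ)) : ℤ := (p.map Prod.fst).sum

/-- A zigzag knight's path ending on the x-axis. -/
def IsZigzagKnightPath (p : List (ℤ × ℤ)) : Prop :=
  IsPartialZigzag p ∧ pathHeight p = 0

/-- The last step of `p` exists and is an up-step. -/
def EndsWithUp (p : List (ℤ × ℤ)) : Prop :=
  ∃ s, p.getLast? = some s ∧ 0 < s.2

/-- The last step of `p` exists and is a down-step. -/
def EndsWithDown (p : List (ℤ × ℤ)) : Prop :=
  ∃ s, p.getLast? = some s ∧ s.2 < 0

def Estep : ℤ × ℤ := (2, 1)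
def Ebar  : ℤ × ℤ := (2, -1)
def Nstep : ℤ × ℤ := (1, 2)
def Nbar  : ℤ × ℤ := (1, -2)

/-- `ichoose m j` is `choose m j` for `j ≥ 0` and `0` for negative `j`. -/
def ichoose (m : ℕ) (j : ℤ) : ℕ := if 0 ≤ j then m.choose j.toNat else 0

def Pset (m : ℕ) (h : ℤ) : Set (List (ℤ × ℤ)) :=
  {p | IsPartialZigzag p ∧ p.length = 2 * m ∧ pathHeight p = h}

lemma step_snd_ne_zero {s : ℤ × ℤ} (hs : s ∈ KnightSteps) : s.2 ≠ 0 := by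
  rcases hs with h | h | h | h <;> subst h <;> norm_num

lemma height_nonneg {m : ℕ} {h : ℤ} {p : List (ℤ × ℤ)} (hp : p ∈ Pset m h) : 0 ≤ h := by
  obtain ⟨⟨⟨_, hnn⟩, _⟩, hlen, hh⟩ := hp
  have := hnn p.length
  rwa [List.take_of_length_le le_rfl, ← pathHeight, hh] at this

lemma pset_neg_empty (m : ℕ) {h : ℤ} (hh : h < 0) : Pset m h = ∅ := by
  ext p; simp only [Set.mem_empty_iff_false, iff_false]
  intro hp; exact absurd (height_nonneg hp) (not_le.2 hh)

/-- sign of last element of a chain -/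
lemma chain_last_sign : ∀ (l : List (ℤ × ℤ)) (a : ℤ × ℤ),
    List.Chain (fun x y => x.2 * y.2 < 0) a l → a.2 ≠ 0 →
    ∃ z, (a :: l).getLast? = some z ∧
      (Even l.length → 0 < a.2 * z.2) ∧ (¬ Even l.length → a.2 * z.2 < 0) := by
  intro l
  induction l with
  | nil =>
    intro a _ ha
    exact ⟨a, rfl, fun _ => mul_self_pos.2 ha, fun h => absurd (Even.zero) h⟩
  | cons b t ih =>
    intro a hc ha
    rcases List.chain_cons.1 hc with ⟨hab, hbt⟩
    have hb : b.2 ≠ 0 := by intro h0; rw [h0, mul_zero] at hab; exact lt_irrefl 0 hab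
    obtain ⟨z, hz, he, ho⟩ := ih b hbt hb
    refine ⟨z, by rw [List.getLast?_cons_cons]; exact hz, ?_, ?_⟩
    · intro hev
      have : ¬ Even t.length := by simpa [Nat.even_add_one] using hev
      have h1 := ho this
      nlinarith [sq_nonneg b.2, sq_nonneg (a.2*z.2)]
    · intro hod
      have : Even t.length := by simpa [Nat.even_add_one] using hod
      have h1 := he this
      nlinarith [sq_nonneg b.2, sq_nonneg (a.2*z.2)]

lemma ends_down {m : ℕ} {h : ℤ} {p : List (ℤ × ℤ)} (hp : p ∈ Pset m h) (hm : 1 ≤ m) :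
    ∃ z, p.getLast? = some z ∧ z.2 < 0 := by
  obtain ⟨⟨⟨hsteps, hnn⟩, hzz⟩, hlen, hh⟩ := hp
  rcases p with _ | ⟨a, t⟩
  · simp at hlen; omega
  · have ha2 : a ∈ KnightSteps := hsteps a List.mem_cons_self
    have hane : a.2 ≠ 0 := step_snd_ne_zero ha2
    have h1 : (0:ℤ) ≤ a.2 := by simpa using hnn 1
    have hapos : 0 < a.2 := lt_of_le_of_ne h1 (Ne.symm hane)
    obtain ⟨z, hz, _, ho⟩ := chain_last_sign t a hzz hane
    have hodd : ¬ Even t.length := by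
      have ht : t.length + 1 = 2 * m := by simpa using hlen
      rw [Nat.even_iff]; omega
    exact ⟨z, hz, by nlinarith [ho hodd, hapos]⟩

lemma pathHeight_append (p q : List (ℤ × ℤ)) :
    pathHeight (p ++ q) = pathHeight p + pathHeight q := by
  simp [pathHeight]

lemma nonneg_append_pair {p : List (ℤ × ℤ)} {u d : ℤ × ℤ} :
    NonnegHeights (p ++ [u, d]) ↔
      NonnegHeights p ∧ 0 ≤ pathHeight p + u.2 ∧ 0 ≤ pathHeight p + u.2 + d.2 := by
  constructor
  · intro hn
    refine ⟨fun i => ?_, ?_, ?_⟩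
    · rcases le_or_gt i p.length with hi | hi
      · have := hn i
        rwa [List.take_append, show i - p.length = 0 by omega,
          List.take_zero, List.append_nil] at this
      · have := hn p.length
        rw [List.take_append, Nat.sub_self, List.take_zero,
          List.append_nil, List.take_of_length_le le_rfl] at this
        rw [List.take_of_length_le (le_of_lt hi)]
        exact this
    · have := hn (p.length + 1)
      rw [List.take_append, List.take_of_length_le (by omega),
        show p.length + 1 - p.length = 1 by omega, show List.take 1 [u,d] = [u] from rfl,
        List.map_append, List.sum_append, ← pathHeight] at this
      simpa using this
    · have := hn (p.length + 2)
      rw [List.take_append, List.take_of_length_le (by omega),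
        show p.length + 2 - p.length = 2 by omega, show List.take 2 [u,d] = [u,d] from rfl,
        List.map_append, List.sum_append, ← pathHeight] at this
      simpa [add_assoc] using this
  · rintro ⟨hn, h1, h2⟩ i
    rw [List.take_append, List.map_append, List.sum_append]
    rcases le_or_gt i p.length with hi | hi
    · rw [show i - p.length = 0 by omega, List.take_zero]
      simpa using hn i
    · rw [List.take_of_length_le (le_of_lt hi), ← pathHeight]
      rcases eq_or_lt_of_le (by omega : p.length + 1 ≤ i) with hi2 | hi2
      · rw [show i - p.length = 1 by omega, show List.take 1 [u,d] = [u] from rfl]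
        simpa using h1
      · have hle : ([u,d] : List (ℤ × ℤ)).length ≤ i - p.length := by
          simp only [List.length_cons, List.length_nil]; omega
        rw [List.take_of_length_le hle]
        simpa [add_assoc] using h2

lemma chain_pair {u d : ℤ × ℤ} (h : u.2 * d.2 < 0) :
    List.Chain' (fun a b : ℤ × ℤ => a.2 * b.2 < 0) [u, d] :=
  List.isChain_cons_cons.2 ⟨h, List.isChain_singleton d⟩

lemma comp {m : ℕ} {h' : ℤ} {q : List (ℤ × ℤ)} {u d : ℤ × ℤ}
    (hq : q ∈ Pset m h')
    (hu : u = (2,1) ∨ u = (1,2)) (hd : d = (2,-1) ∨ d = (1,-2))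
    (hfin : 0 ≤ h' + u.2 + d.2) :
    q ++ [u, d] ∈ Pset (m+1) (h' + u.2 + d.2) := by
  obtain ⟨⟨⟨hsteps, hnn⟩, hzz⟩, hlen, hh⟩ := hq
  have h'nn : 0 ≤ h' := height_nonneg ⟨⟨⟨hsteps, hnn⟩, hzz⟩, hlen, hh⟩
  have hupos : 0 < u.2 := by rcases hu with rfl | rfl <;> norm_num
  have hdneg : d.2 < 0 := by rcases hd with rfl | rfl <;> norm_num
  have huk : u ∈ KnightSteps := by rcases hu with rfl | rfl <;> simp [KnightSteps]
  have hdk : d ∈ KnightSteps := by rcases hd with rfl | rfl <;> simp [KnightSteps]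
  refine ⟨⟨⟨?_, ?_⟩, ?_⟩, ?_, ?_⟩
  · intro s hs
    rcases List.mem_append.1 hs with h1 | h1
    · exact hsteps s h1
    · simp only [List.mem_cons, List.mem_singleton, List.not_mem_nil, or_false] at h1
      rcases h1 with rfl | rfl
      · exact huk
      · exact hdk
  · exact nonneg_append_pair.2 ⟨hnn, by rw [hh]; linarith, by rw [hh]; exact hfin⟩
  · rw [IsZigzag, List.Chain', List.isChain_append]
    refine ⟨hzz, chain_pair (by nlinarith), ?_⟩
    intro x hx y hy
    simp only [List.head?_cons, Option.mem_def, Option.some.injEq] at hy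
    subst hy
    have hqne : q ≠ [] := by
      intro h0; rw [h0] at hx; simp at hx
    have hm1 : 1 ≤ m := by
      rcases Nat.eq_zero_or_pos m with rfl | h1
      · exact absurd (List.length_eq_zero_iff.1 (by omega)) hqne
      · exact h1
    obtain ⟨z, hz, hz2⟩ := ends_down ⟨⟨⟨hsteps, hnn⟩, hzz⟩, hlen, hh⟩ hm1
    rw [Option.mem_def, hz, Option.some.injEq] at hx
    subst hx
    nlinarith
  · simp only [List.length_append, List.length_cons, List.length_nil, hlen]; ring
  · rw [pathHeight_append, hh]
    simp [pathHeight]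
    ring

lemma step_up_cases {u : ℤ × ℤ} (hu : u ∈ KnightSteps) (hpos : 0 < u.2) :
    u = (2,1) ∨ u = (1,2) := by
  rcases hu with h | h | h | h <;> first
    | (left; exact h)
    | (right; exact h)
    | (exfalso; subst h; norm_num at hpos)

lemma step_down_cases {d : ℤ × ℤ} (hd : d ∈ KnightSteps) (hneg : d.2 < 0) :
    d = (2,-1) ∨ d = (1,-2) := by
  rcases hd with h | h | h | h <;> first
    | (left; exact h)
    | (right; exact h)
    | (exfalso; subst h; norm_num at hneg)

lemma decomp {m : ℕ} {h : ℤ} (hm : 1 ≤ m) {p : List (ℤ × ℤ)} (hp : p ∈ Pset m h) :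
    ∃ q u d, p = q ++ [u, d] ∧ (u = (2,1) ∨ u = (1,2)) ∧ (d = (2,-1) ∨ d = (1,-2)) ∧
      q ∈ Pset (m-1) (h - u.2 - d.2) := by
  obtain ⟨z, hz, hz2⟩ := ends_down hp hm
  obtain ⟨⟨⟨hsteps, hnn⟩, hzz⟩, hlen, hh⟩ := hp
  set q := p.take (p.length - 2) with hq
  set r := p.drop (p.length - 2) with hr
  have hpl : 2 ≤ p.length := by omega
  have hrl : r.length = 2 := by
    rw [hr, List.length_drop]; omega
  have hpe : p = q ++ r := (List.take_append_drop _ p).symm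
  rcases r with _ | ⟨u, r1⟩
  · simp at hrl
  rcases r1 with _ | ⟨d, r2⟩
  · simp at hrl
  rcases r2 with _ | ⟨w, r3⟩
  swap
  · simp at hrl
  -- now p = q ++ [u, d]
  have hql : q.length = 2 * (m - 1) := by
    rw [hq, List.length_take]; omega
  have hdz : d = z := by
    have : p.getLast? = some d := by
      rw [hpe, show q ++ [u, d] = (q ++ [u]) ++ [d] by simp, List.getLast?_concat]
    rw [this, Option.some.injEq] at hz; exact hz
  subst hdz
  have hchain := hzz
  rw [IsZigzag, hpe, List.Chain', List.isChain_append] at hchain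
  obtain ⟨hcq, hcp, hlink⟩ := hchain
  have hud : u.2 * d.2 < 0 := (List.isChain_cons_cons.1 hcp).1
  have hupos : 0 < u.2 := by nlinarith
  have huk : u ∈ KnightSteps := hsteps u (by rw [hpe]; simp)
  have hdk : d ∈ KnightSteps := hsteps d (by rw [hpe]; simp)
  have hnn' := hnn
  rw [hpe] at hnn'
  obtain ⟨hnq, _, _⟩ := nonneg_append_pair.1 hnn'
  refine ⟨q, u, d, hpe, step_up_cases huk hupos, step_down_cases hdk hz2,
    ⟨⟨⟨fun s hs => hsteps s (by rw [hpe]; exact List.mem_append_left _ hs), hnq⟩, hcq⟩,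
      hql, ?_⟩⟩
  have : pathHeight p = pathHeight q + (u.2 + d.2) := by
    rw [hpe, pathHeight_append]; simp [pathHeight]
  rw [hh] at this
  linarith

def Ap (b : List (ℤ × ℤ)) (S : Set (List (ℤ × ℤ))) : Set (List (ℤ × ℤ)) :=
  (fun q => q ++ b) '' S

lemma pset_succ_eq (m : ℕ) {h : ℤ} (hh : 0 ≤ h) :
    Pset (m+1) h =
      Ap [(1,2),(2,-1)] (Pset m (h-1)) ∪ Ap [(1,2),(1,-2)] (Pset m h) ∪
      Ap [(2,1),(2,-1)] (Pset m h) ∪ Ap [(2,1),(1,-2)] (Pset m (h+1)) := by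
  ext p
  constructor
  · intro hp
    obtain ⟨q, u, d, rfl, hu, hd, hq⟩ := decomp (by omega) hp
    simp only [Nat.add_sub_cancel] at hq
    rcases hu with rfl | rfl <;> rcases hd with rfl | rfl
    · -- u=(2,1), d=(2,-1) : δ = 0
      rw [show h - ((2,1):ℤ×ℤ).2 - ((2,-1):ℤ×ℤ).2 = h by norm_num; try ring] at hq
      exact Or.inl (Or.inr ⟨q, hq, rfl⟩)
    · -- u=(2,1), d=(1,-2) : δ = -1
      rw [show h - ((2,1):ℤ×ℤ).2 - ((1,-2):ℤ×ℤ).2 = h + 1 by norm_num; try ring] at hq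
      exact Or.inr ⟨q, hq, rfl⟩
    · -- u=(1,2), d=(2,-1) : δ = 1
      rw [show h - ((1,2):ℤ×ℤ).2 - ((2,-1):ℤ×ℤ).2 = h - 1 by norm_num; try ring] at hq
      exact Or.inl (Or.inl (Or.inl ⟨q, hq, rfl⟩))
    · -- u=(1,2), d=(1,-2) : δ = 0
      rw [show h - ((1,2):ℤ×ℤ).2 - ((1,-2):ℤ×ℤ).2 = h by norm_num; try ring] at hq
      exact Or.inl (Or.inl (Or.inr ⟨q, hq, rfl⟩))
  · intro hp
    rcases hp with ((⟨q, hq, rfl⟩ | ⟨q, hq, rfl⟩) | ⟨q, hq, rfl⟩) | ⟨q, hq, rfl⟩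
    · have := comp hq (Or.inr rfl) (Or.inl rfl) (by norm_num; omega)
      rwa [show h - 1 + ((1,2):ℤ×ℤ).2 + ((2,-1):ℤ×ℤ).2 = h by norm_num; try ring] at this
    · have := comp hq (Or.inr rfl) (Or.inr rfl) (by norm_num; exact hh)
      rwa [show h + ((1,2):ℤ×ℤ).2 + ((1,-2):ℤ×ℤ).2 = h by norm_num; try ring] at this
    · have := comp hq (Or.inl rfl) (Or.inl rfl) (by norm_num; exact hh)
      rwa [show h + ((2,1):ℤ×ℤ).2 + ((2,-1):ℤ×ℤ).2 = h by norm_num; try ring] at this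
    · have := comp hq (Or.inl rfl) (Or.inr rfl) (by norm_num; omega)
      rwa [show h + 1 + ((2,1):ℤ×ℤ).2 + ((1,-2):ℤ×ℤ).2 = h by norm_num; try ring] at this

lemma pset_zero (h : ℤ) : Pset 0 h = if h = 0 then {([] : List (ℤ × ℤ))} else ∅ := by
  ext p
  constructor
  · rintro ⟨_, hlen, hh⟩
    have : p = [] := List.length_eq_zero_iff.1 (by omega)
    subst this
    have : h = 0 := by simpa [pathHeight] using hh.symm
    simp [this]
  · intro hp
    split_ifs at hp with h0
    · rw [Set.mem_singleton_iff] at hp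
      subst hp; subst h0
      exact ⟨⟨⟨by simp, fun i => by simp⟩, List.isChain_nil⟩, by simp, rfl⟩
    · exact absurd hp (Set.notMem_empty p)

lemma pset_finite : ∀ (m : ℕ) (h : ℤ), (Pset m h).Finite := by
  intro m
  induction m with
  | zero => intro h; rw [pset_zero]; split_ifs <;> simp
  | succ m ih =>
    intro h
    rcases lt_or_ge h 0 with h0 | h0
    · rw [pset_neg_empty _ h0]; exact Set.finite_empty
    · rw [pset_succ_eq m h0]
      exact (((((ih (h-1)).image _).union ((ih h).image _)).union
        ((ih h).image _)).union ((ih (h+1)).image _))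

lemma ap_disjoint {b1 b2 : List (ℤ × ℤ)} (h1 : b1.length = 2) (h2 : b2.length = 2)
    (hne : b1 ≠ b2) (S T : Set (List (ℤ × ℤ))) : Disjoint (Ap b1 S) (Ap b2 T) := by
  rw [Set.disjoint_left]
  rintro x ⟨q1, _, rfl⟩ ⟨q2, _, heq⟩
  have hl : q2.length = q1.length := by
    have := congrArg List.length heq
    simp only [List.length_append, h1, h2] at this
    omega
  exact hne ((List.append_inj heq hl).2.symm) |>.elim

lemma ap_ncard (b : List (ℤ × ℤ)) (S : Set (List (ℤ × ℤ))) :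
    (Ap b S).ncard = S.ncard :=
  Set.ncard_image_of_injective S (List.append_left_injective b)

noncomputable def c (m : ℕ) (h : ℤ) : ℕ := (Pset m h).ncard

lemma c_rec (m : ℕ) {h : ℤ} (hh : 0 ≤ h) :
    c (m+1) h = c m (h-1) + c m h + c m h + c m (h+1) := by
  have fin : ∀ (h' : ℤ) (b : List (ℤ × ℤ)), (Ap b (Pset m h')).Finite :=
    fun h' b => (pset_finite m h').image _
  have dsj : ∀ (b1 b2 : List (ℤ × ℤ)), b1.length = 2 → b2.length = 2 → b1 ≠ b2 →
      ∀ S T, Disjoint (Ap b1 S) (Ap b2 T) := fun b1 b2 hb1 hb2 hne S T =>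
    ap_disjoint hb1 hb2 hne S T
  rw [c, pset_succ_eq m hh]
  rw [Set.ncard_union_eq ?d1 ?f1 ?f2, Set.ncard_union_eq ?d2 ?f3 ?f4,
    Set.ncard_union_eq ?d3 ?f5 ?f6]
  · rw [ap_ncard, ap_ncard, ap_ncard, ap_ncard]; rfl
  case f1 => exact ((fin _ _).union (fin _ _)).union (fin _ _)
  case f2 => exact fin _ _
  case f3 => exact (fin _ _).union (fin _ _)
  case f4 => exact fin _ _
  case f5 => exact fin _ _
  case f6 => exact fin _ _
  case d3 => exact dsj _ _ (by simp) (by simp) (by decide) _ _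
  case d2 =>
    refine Set.disjoint_union_left.2 ⟨?_, ?_⟩
    · exact dsj _ _ (by simp) (by simp) (by decide) _ _
    · exact dsj _ _ (by simp) (by simp) (by decide) _ _
  case d1 =>
    refine Set.disjoint_union_left.2 ⟨Set.disjoint_union_left.2 ⟨?_, ?_⟩, ?_⟩
    · exact dsj _ _ (by simp) (by simp) (by decide) _ _
    · exact dsj _ _ (by simp) (by simp) (by decide) _ _
    · exact dsj _ _ (by simp) (by simp) (by decide) _ _

lemma ichoose_pascal (m : ℕ) (j : ℤ) :
    ichoose (m+1) j = ichoose m j + ichoose m (j-1) := by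
  rcases lt_trichotomy j 0 with h | h | h
  · rw [ichoose, ichoose, ichoose, if_neg (not_le.2 h), if_neg (not_le.2 h),
      if_neg (not_le.2 (by omega : j - 1 < 0))]
  · subst h; simp [ichoose]
  · have h0 : (0:ℤ) ≤ j := le_of_lt h
    have h1 : (0:ℤ) ≤ j - 1 := by omega
    rw [ichoose, ichoose, ichoose, if_pos h0, if_pos h0, if_pos h1]
    have ht : j.toNat = (j-1).toNat + 1 := by omega
    rw [ht, Nat.choose_succ_succ]
    simp [Nat.succ_eq_add_one]; omega

def F (m : ℕ) (j : ℤ) : ℤ := (ichoose (2*m+1) (m - j) : ℤ) - ichoose (2*m+1) (m - j - 1)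

lemma F_neg_one (m : ℕ) : F m (-1) = 0 := by
  have h1 : (m : ℤ) - (-1) = ((m+1 : ℕ) : ℤ) := by push_cast; ring
  have h2 : (m : ℤ) - (-1) - 1 = ((m : ℕ) : ℤ) := by ring
  have h3 : (2*m+1).choose (m+1) = (2*m+1).choose m := by
    have := Nat.choose_symm (n := 2*m+1) (k := m) (by omega)
    simpa [show 2*m+1-m = m+1 by omega] using this
  rw [F, h2, h1]
  rw [ichoose, ichoose, if_pos (by positivity), if_pos (by positivity),
    Int.toNat_natCast, Int.toNat_natCast, h3]
  ring

lemma F_rec (m : ℕ) (j : ℤ) :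
    F (m+1) j = F m (j-1) + 2 * F m j + F m (j+1) := by
  have p1 : ∀ a : ℤ, (ichoose (2*(m+1)+1) a : ℤ)
      = ichoose (2*m+1) a + 2 * ichoose (2*m+1) (a-1) + ichoose (2*m+1) (a-2) := by
    intro a
    have e1 : ichoose (2*(m+1)+1) a = ichoose (2*m+2) a + ichoose (2*m+2) (a-1) :=
      ichoose_pascal (2*m+2) a
    have e2 : ichoose (2*m+2) a = ichoose (2*m+1) a + ichoose (2*m+1) (a-1) :=
      ichoose_pascal (2*m+1) a
    have e3 : ichoose (2*m+2) (a-1) = ichoose (2*m+1) (a-1) + ichoose (2*m+1) (a-1-1) :=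
      ichoose_pascal (2*m+1) (a-1)
    rw [show a - 1 - 1 = a - 2 by ring] at e3
    rw [e1, e2, e3]; push_cast; ring
  rw [show F (m+1) j = (ichoose (2*(m+1)+1) ((m:ℤ)+1 - j) : ℤ)
      - ichoose (2*(m+1)+1) ((m:ℤ)+1 - j - 1) by rw [F]; push_cast; ring_nf]
  rw [p1, p1]
  rw [F, F, F]
  have r1 : (m:ℤ) + 1 - j - 1 = (m:ℤ) - j := by ring
  have r2 : (m:ℤ) + 1 - j - 2 = (m:ℤ) - j - 1 := by ring
  have r3 : (m:ℤ) + 1 - j - 1 - 1 = (m:ℤ) - j - 1 := by ring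
  have r4 : (m:ℤ) + 1 - j - 1 - 2 = (m:ℤ) - j - 2 := by ring
  have r5 : (m:ℤ) - (j-1) = (m:ℤ) + 1 - j := by ring
  have r6 : (m:ℤ) - (j-1) - 1 = (m:ℤ) - j := by ring
  have r7 : (m:ℤ) - (j+1) = (m:ℤ) - j - 1 := by ring
  have r8 : (m:ℤ) - (j+1) - 1 = (m:ℤ) - j - 2 := by ring
  ring_nf

lemma ichoose_of_neg {m : ℕ} {j : ℤ} (h : j < 0) : ichoose m j = 0 := by
  rw [ichoose, if_neg (not_le.2 h)]

lemma ichoose_natCast (m a : ℕ) : ichoose m (a : ℤ) = m.choose a := by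
  rw [ichoose, if_pos (by positivity), Int.toNat_natCast]


lemma F_closed (n k : ℕ) :
    ((n:ℤ)+1) * F n k = ((k:ℤ)+1) * ichoose (2*n+2) ((n:ℤ)-k) := by
  rcases lt_or_ge n k with h | h
  · rw [F, ichoose_of_neg (by omega : (n:ℤ) - k < 0),
      ichoose_of_neg (by omega : (n:ℤ) - k < 0),
      ichoose_of_neg (by omega : (n:ℤ) - k - 1 < 0)]
    ring
  · set a := n - k with ha
    have hca : (n:ℤ) - k = (a:ℤ) := by omega
    rcases Nat.eq_zero_or_pos a with h0 | h0
    · have hnk : n = k := by omega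
      rw [F, hca, h0, ichoose_of_neg (by omega : ((0:ℕ):ℤ) - 1 < 0)]
      simp [ichoose, hnk]
    · have key : (2*n+1).choose a * a = (2*n+1).choose (a-1) * (n+k+2) := by
        have h1 := Nat.choose_succ_right_eq (2*n+1) (a-1)
        rw [show a - 1 + 1 = a by omega, show 2*n+1 - (a-1) = n+k+2 by omega] at h1
        exact h1
      have pas : (2*n+2).choose a = (2*n+1).choose (a-1) + (2*n+1).choose a := by
        have := Nat.choose_succ_succ (2*n+1) (a-1)
        rw [show (a-1).succ = a by omega] at this
        exact this
      have e1 : (a:ℤ) - 1 = ((a-1 : ℕ) : ℤ) := by omega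
      rw [F, hca, e1, ichoose_natCast, ichoose_natCast, ichoose_natCast, pas]
      have hZ : ((2*n+1).choose a : ℤ) * a = (2*n+1).choose (a-1) * ((n:ℤ)+k+2) := by
        exact_mod_cast key
      have haz : (a:ℤ) = (n:ℤ) - k := by omega
      push_cast
      nlinarith [hZ]

lemma c_zero (h : ℤ) : c 0 h = if h = 0 then 1 else 0 := by
  rw [c, pset_zero]
  split_ifs
  · exact Set.ncard_singleton _
  · exact Set.ncard_empty _

lemma main_count : ∀ (m : ℕ) (h : ℤ), -1 ≤ h → ((c m h : ℤ) = F m h) := by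
  intro m
  induction m with
  | zero =>
    intro h hh
    rcases lt_trichotomy h 0 with h0 | h0 | h0
    · have : h = -1 := by omega
      subst this
      rw [F_neg_one, c, pset_neg_empty 0 (by norm_num), Set.ncard_empty]
      rfl
    · subst h0
      rw [c_zero]
      norm_num [F, ichoose]
    · rw [c_zero, if_neg (by omega), F,
        ichoose_of_neg (by push_cast; omega : ((0:ℕ):ℤ) - h < 0),
        ichoose_of_neg (by push_cast; omega : ((0:ℕ):ℤ) - h - 1 < 0)]
      norm_num
  | succ m ih =>
    intro h hh
    rcases lt_or_ge h 0 with h0 | h0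
    · have : h = -1 := by omega
      subst this
      rw [F_neg_one, c, pset_neg_empty _ (by norm_num), Set.ncard_empty]
      rfl
    · rw [F_rec]
      have e := c_rec m h0
      have i1 := ih (h-1) (by omega)
      have i2 := ih h (by omega)
      have i3 := ih (h+1) (by omega)
      have : ((c (m+1) h : ℤ)) = (c m (h-1) : ℤ) + c m h + c m h + c m (h+1) := by
        exact_mod_cast congrArg (Nat.cast : ℕ → ℤ) e
      rw [this, i1, i2, i3]
      ring

/-- partial zigzag knight's paths of length 2n ending at height k
with a down last step are counted by ((k+1)/(n+1))·binom(2n+2, n−k). -/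
theorem stmt4 (n k : ℕ) (hn : 1 ≤ n) (hk : 1 ≤ k) :
    (Nat.card {p : List (ℤ × ℤ) //
        IsPartialZigzag p ∧ p.length = 2 * n ∧ pathHeight p = k ∧ EndsWithDown p} : ℚ)
      = ((k + 1 : ℚ) / (n + 1)) * (ichoose (2 * n + 2) ((n : ℤ) - k) : ℚ) := by
  have hset : {p : List (ℤ × ℤ) |
      IsPartialZigzag p ∧ p.length = 2 * n ∧ pathHeight p = (k:ℤ) ∧ EndsWithDown p}
      = Pset n (k:ℤ) := by
    ext p
    constructor
    · rintro ⟨h1, h2, h3, _⟩; exact ⟨h1, h2, h3⟩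
    · intro hp
      obtain ⟨z, hz, hz2⟩ := ends_down hp hn
      exact ⟨hp.1, hp.2.1, hp.2.2, z, hz, hz2⟩
  have h1 : Nat.card {p : List (ℤ × ℤ) //
      IsPartialZigzag p ∧ p.length = 2 * n ∧ pathHeight p = (k:ℤ) ∧ EndsWithDown p}
      = c n (k:ℤ) := by
    rw [c, ← hset]
    exact Nat.card_coe_set_eq _
  rw [h1]
  have h2 : ((c n (k:ℤ) : ℤ)) = F n k := main_count n k (by omega)
  have h3 := F_closed n k
  have hQ : ((n:ℚ)+1) * ((F n (k:ℤ) : ℤ) : ℚ)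
      = ((k:ℚ)+1) * (ichoose (2*n+2) ((n:ℤ)-k) : ℚ) := by exact_mod_cast h3
  have hc : ((c n (k:ℤ) : ℕ) : ℚ) = ((F n (k:ℤ) : ℤ) : ℚ) := by exact_mod_cast h2
  rw [hc, div_mul_eq_mul_div, eq_div_iff (by positivity : ((n:ℚ)+1) ≠ 0)]
  linarith [hQ]
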